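/- Let (𝒱,ℰ,s,r,≥) be a finite ordered surjective mono-graph. Then there exists a positive integer K such that in the stationary ordered Bratteli diagram generated by (𝒱,ℰ^K,s,r,≥), every maximal infinite path and every minimal infinite path is straight, i.e., passes through copies of a single fixed edge of ℰ^K at every level ≥ 2. -/

import Mathlib

private lemma iter_idem {α : Type} [Finite α] (f : α → α) :
    ∃ K, 0 < K ∧ ∀ x, f^[K] (f^[K] x) = f^[K] x := by
  obtain ⟨m, n, hmn, h⟩ : ∃ m n, m < n ∧ f^[m] = f^[n] := by
    obtain ⟨a, b, hab, h⟩ := Finite.exists_ne_map_eq_of_infinite (fun n : ℕ => f^[n])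
    rcases lt_or_gt_of_ne hab with h' | h'
    · exact ⟨a, b, h', h⟩
    · exact ⟨b, a, h', h.symm⟩
  set d := n - m with hd_def
  have hd : 0 < d := by omega
  have step : ∀ a, m ≤ a → f^[a + d] = f^[a] := by
    intro a ha
    have h1 : a + d = (a - m) + n := by omega
    have h2 : a = (a - m) + m := by omega
    rw [h1, Function.iterate_add, ← h, ← Function.iterate_add, ← h2]
  have key : ∀ c a, m ≤ a → f^[a + c * d] = f^[a] := by
    intro c
    induction c with
    | zero => simp
    | succ c ih =>
      intro a ha
      have h1 : a + (c + 1) * d = (a + d) + c * d := by ring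
      rw [h1, ih (a + d) (by omega), step a ha]
  refine ⟨(m + 1) * d, by positivity, fun x => ?_⟩
  have h2 : f^[(m + 1) * d] (f^[(m + 1) * d] x) = f^[(m + 1) * d + (m + 1) * d] x :=
    (Function.iterate_add_apply f _ _ x).symm
  rw [h2, key (m + 1) ((m + 1) * d) (by nlinarith)]

private lemma idem_iter {α : Type} (h : α → α) (hh : ∀ x, h (h x) = h x) :
    ∀ n, 0 < n → ∀ x, h^[n] x = h x := by
  intro n
  induction n with
  | zero => omega
  | succ n ih =>
    intro _ x
    rcases Nat.eq_zero_or_pos n with hn | hn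
    · simp [hn]
    · rw [Function.iterate_succ_apply', ih hn, hh]

private lemma aux_period {ℰ : Type} (f : ℰ → ℰ) (K : ℕ)
    (hK : ∀ x, f^[K] (f^[K] x) = f^[K] x)
    (p : ℕ → ℰ) (hstep : ∀ i, p i = f (p (i + 1))) : ∀ i, p (i + K) = p i := by
  have hiter : ∀ n i, p i = f^[n] (p (i + n)) := by
    intro n
    induction n with
    | zero => simp
    | succ n ih =>
      intro i
      have : i + (n + 1) = (i + 1) + n := by omega
      rw [this, hstep i, ih (i + 1), Function.iterate_succ_apply']
  intro i
  have h1 := hiter K i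
  have h2 := hiter K (i + K)
  rw [h2, h1, h2, hK]

/-- Telescoping a stationary ordered Bratteli diagram so that all maximal and minimal
infinite paths become straight: there is `K > 0` such that every maximal (resp.
minimal) infinite path `p : ℕ → ℰ` (each edge maximal, resp. minimal, in its range
fiber, and chained by `r (p i) = s (p (i+1))`) is `K`-periodic, i.e. after grouping
edges into blocks of length `K` (telescoping), the path passes through copies of one
fixed element of `ℰ^K` at every level. -/
theorem stmt10 (𝒱 ℰ : Type) [Fintype 𝒱] [Fintype ℰ] [PartialOrder ℰ]
    (s r : ℰ → 𝒱) (hr : Function.Surjective r) (hs : Function.Surjective s)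
    (hcomp : ∀ e e' : ℰ, r e = r e' ↔ (e ≤ e' ∨ e' ≤ e)) :
    ∃ K : ℕ, 0 < K ∧
      (∀ p : ℕ → ℰ, (∀ i, r (p i) = s (p (i + 1))) →
        (∀ i, ∀ e' : ℰ, r e' = r (p i) → e' ≤ p i) → ∀ i, p (i + K) = p i) ∧
      (∀ p : ℕ → ℰ, (∀ i, r (p i) = s (p (i + 1))) →
        (∀ i, ∀ e' : ℰ, r e' = r (p i) → p i ≤ e') → ∀ i, p (i + K) = p i) := by
  classical
  -- greatest element of each range fiber
  have top_ex : ∀ v : 𝒱, ∃ t : ℰ, r t = v ∧ ∀ e', r e' = v → e' ≤ t := by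
    intro v
    obtain ⟨e0, he0⟩ := hr v
    obtain ⟨m, hm, hmax⟩ : ∃ m ∈ Finset.univ.filter fun e => r e = v,
        ∀ x ∈ Finset.univ.filter fun e => r e = v, ¬ m < x := by
      obtain ⟨m, hm⟩ := Finset.exists_maximal (s := Finset.univ.filter fun e => r e = v) ⟨e0, by simp [he0]⟩
      exact ⟨m, hm.1, fun x hx hlt => hlt.not_ge (hm.2 hx hlt.le)⟩
    simp only [Finset.mem_filter, Finset.mem_univ, true_and] at hm
    refine ⟨m, hm, fun e' he' => ?_⟩
    rcases (hcomp e' m).mp (by rw [he', hm]) with h | h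
    · exact h
    · rcases h.lt_or_eq with h | h
      · exact absurd h (by simpa using hmax e' (by simp [he']))
      · exact h.ge
  have bot_ex : ∀ v : 𝒱, ∃ t : ℰ, r t = v ∧ ∀ e', r e' = v → t ≤ e' := by
    intro v
    obtain ⟨e0, he0⟩ := hr v
    obtain ⟨m, hm, hmin⟩ : ∃ m ∈ Finset.univ.filter fun e => r e = v,
        ∀ x ∈ Finset.univ.filter fun e => r e = v, ¬ x < m := by
      obtain ⟨m, hm⟩ := Finset.exists_minimal (s := Finset.univ.filter fun e => r e = v) ⟨e0, by simp [he0]⟩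
      exact ⟨m, hm.1, fun x hx hlt => hlt.not_ge (hm.2 hx hlt.le)⟩
    simp only [Finset.mem_filter, Finset.mem_univ, true_and] at hm
    refine ⟨m, hm, fun e' he' => ?_⟩
    rcases (hcomp e' m).mp (by rw [he', hm]) with h | h
    · rcases h.lt_or_eq with h | h
      · exact absurd h (by simpa using hmin e' (by simp [he']))
      · exact h.ge
    · exact h
  let top : 𝒱 → ℰ := fun v => Classical.choose (top_ex v)
  let bot : 𝒱 → ℰ := fun v => Classical.choose (bot_ex v)
  have htop : ∀ v, r (top v) = v ∧ ∀ e', r e' = v → e' ≤ top v :=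
    fun v => Classical.choose_spec (top_ex v)
  have hbot : ∀ v, r (bot v) = v ∧ ∀ e', r e' = v → bot v ≤ e' :=
    fun v => Classical.choose_spec (bot_ex v)
  let f : ℰ → ℰ := fun e => top (s e)
  let g : ℰ → ℰ := fun e => bot (s e)
  obtain ⟨Kf, hKf, hf⟩ := iter_idem f
  obtain ⟨Kg, hKg, hg⟩ := iter_idem g
  refine ⟨Kf * Kg, by positivity, ?_, ?_⟩
  · -- maximal paths
    intro p hchain hmax
    have hFK : ∀ x, f^[Kf * Kg] x = f^[Kf] x := by
      intro x
      rw [Function.iterate_mul]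
      exact idem_iter _ hf Kg hKg x
    refine aux_period f (Kf * Kg) (fun x => by rw [hFK, hFK, hf]) p ?_
    intro i
    have h1 := htop (s (p (i + 1)))
    apply le_antisymm
    · exact h1.2 (p i) (hchain i)
    · exact hmax i (f (p (i + 1))) (by rw [h1.1, hchain i])
  · -- minimal paths
    intro p hchain hmin
    have hGK : ∀ x, g^[Kf * Kg] x = g^[Kg] x := by
      intro x
      rw [mul_comm, Function.iterate_mul]
      exact idem_iter _ hg Kf hKf x
    refine aux_period g (Kf * Kg) (fun x => by rw [hGK, hGK, hg]) p ?_
    intro i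
    have h1 := hbot (s (p (i + 1)))
    apply le_antisymm
    · exact hmin i (g (p (i + 1))) (by rw [h1.1, hchain i])
    · exact h1.2 (p i) (hchain i)
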